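/- Let T ≥ 1 be a natural number and define sizes s : ℕ → ℕ by s(1) = 2^(T−1) and s(i) = 3·2^(T−i) for 2 ≤ i ≤ T. Then for every subset S ⊆ {1,…,T}, the total size ∑_{i∈S} s(i) is not equal to 2^T. -/

import Mathlib

theorem stmt_9 (T : ℕ) (hT : 1 ≤ T) (s : ℕ → ℕ)
    (hs1 : s 1 = 2 ^ (T - 1))
    (hsi : ∀ i, 2 ≤ i → i ≤ T → s i = 3 * 2 ^ (T - i)) :
    ∀ S ⊆ Finset.Icc 1 T, (∑ i ∈ S, s i) ≠ 2 ^ T := by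
  intro S hS h
  have hz : ((∑ i ∈ S, s i : ℕ) : ZMod 3) = (2 ^ T : ℕ) := by exact_mod_cast congrArg _ h
  push_cast at hz
  have hsum : (∑ i ∈ S, (s i : ZMod 3)) =
      if 1 ∈ S then ((2 : ZMod 3) ^ (T - 1)) else 0 := by
    by_cases h1 : 1 ∈ S
    · rw [← Finset.add_sum_erase _ _ h1]
      have : (∑ i ∈ S.erase 1, (s i : ZMod 3)) = 0 := by
        apply Finset.sum_eq_zero
        intro i hi
        have hiS := Finset.mem_of_mem_erase hi
        have hmem := hS hiS
        simp only [Finset.mem_Icc] at hmem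
        have hne : i ≠ 1 := Finset.ne_of_mem_erase hi
        have h2 : 2 ≤ i := by omega
        rw [hsi i h2 hmem.2]
        push_cast
        ring_nf
        simp [show (3 : ZMod 3) = 0 by decide]
      rw [this, add_zero, hs1, if_pos h1]
      push_cast
      ring
    · rw [if_neg h1]
      apply Finset.sum_eq_zero
      intro i hi
      have hmem := hS hi
      simp only [Finset.mem_Icc] at hmem
      have hne : i ≠ 1 := fun he => h1 (he ▸ hi)
      have h2 : 2 ≤ i := by omega
      rw [hsi i h2 hmem.2]
      push_cast
      ring_nf
      simp [show (3 : ZMod 3) = 0 by decide]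
  rw [hsum] at hz
  have hpow : (2 : ZMod 3) ^ (T - 1) ≠ 0 := by
    apply pow_ne_zero; decide
  have hT2 : (2 : ZMod 3) ^ T = 2 * 2 ^ (T - 1) := by
    rw [← pow_succ']
    congr 1
    omega
  rw [hT2] at hz
  by_cases h1 : 1 ∈ S
  · rw [if_pos h1] at hz
    have : (2 : ZMod 3) ^ (T - 1) = 0 := by linear_combination -hz
    exact hpow this
  · rw [if_neg h1] at hz
    have : (2 : ZMod 3) ^ (T - 1) = 0 := by
      have h2 : (2 : ZMod 3) ≠ 0 := by decide
      field_simp at hz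
      exact (mul_eq_zero.mp hz.symm).resolve_left h2
    exact hpow this
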